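/- arXiv:0802.2866 — 2 statements merged into one kernel-verified Lean document; each statement's English description precedes it below -/
import Mathlib

section
/- Let Γ be an alphabet, M a monoid, f : Γ → M a map, g : ℕ → ℕ strictly increasing, y₁, y₂ : ℕ → Γ ω-words, and e ∈ M. Suppose g is an (f,e)-homogeneous factorisation of both y₁ and y₂. Then for every set S ⊆ ℕ, the sequence g is an (f,e)-homogeneous factorisation of the shuffle χ_S of y₁ and y₂ along g and S; moreover the prefix of χ_S below position g(0) is equal to the prefix of y₂ below g(0). -/
/-- The product `f(α[m,n)) = f (α m) * f (α (m+1)) * ⋯ * f (α (n-1))` in a monoid. -/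
def blockProd {A M : Type*} [Monoid M] (f : A → M) (α : ℕ → A) (m n : ℕ) : M :=
  ((List.range' m (n - m)).map fun i => f (α i)).prod

/-- A strictly increasing sequence `g` is an `(f,e)`-homogeneous factorisation of `α`
if `f(α[g n, g (n+1))) = e` for all `n`. -/
def Homog {A M : Type*} [Monoid M] (f : A → M) (e : M) (g : ℕ → ℕ) (α : ℕ → A) : Prop :=
  ∀ n : ℕ, blockProd f α (g n) (g (n + 1)) = e

open Classical in
/-- The shuffle `χ_S` of `y₁` and `y₂` along `g` and `S`: it equals `y₂` below `g 0`,
and on the block `[g n, g (n+1))` it equals `y₂` if `n ∈ S` and `y₁` otherwise. -/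
noncomputable def shuffle {A : Type*} (y₁ y₂ : ℕ → A) (g : ℕ → ℕ) (S : Set ℕ) : ℕ → A :=
  fun i =>
    if i < g 0 then y₂ i
    else if Nat.findGreatest (fun n => g n ≤ i) i ∈ S then y₂ i else y₁ i

lemma blockProd_congr {A M : Type*} [Monoid M] (f : A → M) (α β : ℕ → A) (m n : ℕ)
    (h : ∀ i, m ≤ i → i < n → α i = β i) :
    blockProd f α m n = blockProd f β m n := by
  unfold blockProd
  congr 1
  apply List.map_congr_left
  intro i hi
  rw [List.mem_range'_1] at hi
  rw [h i hi.1 (by omega)]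

/-- if `g` is an `(f,e)`-homogeneous factorisation of both `y₁` and `y₂`,
then it is an `(f,e)`-homogeneous factorisation of every shuffle `χ_S`, and `χ_S`
agrees with `y₂` below position `g 0`. -/
theorem stmt9 {A M : Type*} [Monoid M] (f : A → M) (g : ℕ → ℕ) (hg : StrictMono g)
    (y₁ y₂ : ℕ → A) (e : M)
    (h₁ : Homog f e g y₁) (h₂ : Homog f e g y₂) :
    ∀ S : Set ℕ,
      Homog f e g (shuffle y₁ y₂ g S) ∧
      ∀ i : ℕ, i < g 0 → shuffle y₁ y₂ g S i = y₂ i := by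
  classical
  intro S
  have key : ∀ n i, g n ≤ i → i < g (n + 1) →
      (Nat.findGreatest (fun k => g k ≤ i) i : ℕ) = n := by
    intro n i h1 h2
    have hni : n ≤ i := le_trans hg.le_apply h1
    refine le_antisymm ?_ (Nat.le_findGreatest hni h1)
    by_contra h
    push_neg at h
    set m := Nat.findGreatest (fun k => g k ≤ i) i with hm
    have hm0 : m ≠ 0 := by omega
    have hgm : g m ≤ i := Nat.findGreatest_of_ne_zero (P := fun k => g k ≤ i) hm.symm hm0
    have : g (n + 1) ≤ g m := hg.monotone (by omega)
    omega
  have hblock : ∀ n i, g n ≤ i → i < g (n + 1) →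
      shuffle y₁ y₂ g S i = if n ∈ S then y₂ i else y₁ i := by
    intro n i h1 h2
    have h0 : g 0 ≤ i := le_trans (hg.monotone (Nat.zero_le n)) h1
    unfold shuffle
    rw [if_neg (by omega)]
    have := key n i h1 h2
    simp only [this]
  constructor
  · intro n
    by_cases hS : n ∈ S
    · rw [show blockProd f (shuffle y₁ y₂ g S) (g n) (g (n + 1)) = blockProd f y₂ (g n) (g (n + 1)) from
        blockProd_congr f _ _ _ _ (fun i hi1 hi2 => by rw [hblock n i hi1 hi2, if_pos hS])]
      exact h₂ n
    · rw [show blockProd f (shuffle y₁ y₂ g S) (g n) (g (n + 1)) = blockProd f y₁ (g n) (g (n + 1)) from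
        blockProd_congr f _ _ _ _ (fun i hi1 hi2 => by rw [hblock n i hi1 hi2, if_neg hS])]
      exact h₁ n
  · intro i hi
    unfold shuffle
    rw [if_pos hi]
end

section
/- Let Σ be an alphabet, N a monoid, gmap : Σ × Σ → N a map, g : ℕ → ℕ strictly increasing, and y₁, y₂ : ℕ → Σ ω-words. Suppose there are elements t, t↑, t↓ ∈ N such that g is a (gmap, t)-homogeneous factorisation of zip(y₁,y₁) and of zip(y₂,y₂), a (gmap, t↑)-homogeneous factorisation of zip(y₁,y₂), and a (gmap, t↓)-homogeneous factorisation of zip(y₂,y₁). Then for all S, T ⊆ ℕ and every n ∈ ℕ, the gmap-value of the block of zip(χ_S, χ_T) on the interval [g(n), g(n+1)) equals t↓ if n ∈ S \ T, equals t↑ if n ∈ T \ S, and equals t if n ∈ S ∩ T or n ∉ S ∪ T; moreover the gmap-value of the prefix of zip(χ_S, χ_T) below g(0) equals that of zip(y₂,y₂) below g(0). -/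
/-- The convolution of two ω-words. -/
def zipWord {A B : Type*} (x : ℕ → A) (y : ℕ → B) : ℕ → A × B := fun n => (x n, y n)

open Classical in
lemma findGreatest_block (g : ℕ → ℕ) (hg : StrictMono g) {n i : ℕ}
    (h1 : g n ≤ i) (h2 : i < g (n + 1)) :
    Nat.findGreatest (fun k => g k ≤ i) i = n := by
  rw [Nat.findGreatest_eq_iff]
  refine ⟨le_trans hg.le_apply h1, fun _ => h1, ?_⟩
  intro m hm _ hgm
  exact absurd (lt_of_le_of_lt (le_trans (hg.monotone hm) hgm) h2) (lt_irrefl _)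

open Classical in
lemma shuffle_eq {A : Type*} (y₁ y₂ : ℕ → A) (g : ℕ → ℕ) (hg : StrictMono g) (S : Set ℕ)
    {n i : ℕ} (h1 : g n ≤ i) (h2 : i < g (n + 1)) :
    shuffle y₁ y₂ g S i = if n ∈ S then y₂ i else y₁ i := by
  unfold shuffle
  rw [if_neg (not_lt.2 (le_trans (hg.monotone (Nat.zero_le n)) h1)),
    findGreatest_block g hg h1 h2]

open Classical in
lemma shuffle_lt {A : Type*} (y₁ y₂ : ℕ → A) (g : ℕ → ℕ) (S : Set ℕ)
    {i : ℕ} (h : i < g 0) : shuffle y₁ y₂ g S i = y₂ i := by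
  unfold shuffle; rw [if_pos h]

/-- block values of the convolution of two shuffles. -/
theorem stmt10 {A N : Type*} [Monoid N] (gmap : A × A → N) (g : ℕ → ℕ)
    (hg : StrictMono g) (y₁ y₂ : ℕ → A) (t tu td : N)
    (h₁₁ : Homog gmap t g (zipWord y₁ y₁)) (h₂₂ : Homog gmap t g (zipWord y₂ y₂))
    (h₁₂ : Homog gmap tu g (zipWord y₁ y₂)) (h₂₁ : Homog gmap td g (zipWord y₂ y₁)) :
    ∀ S T : Set ℕ,
      (∀ n : ℕ,
        (n ∈ S → n ∉ T →
          blockProd gmap (zipWord (shuffle y₁ y₂ g S) (shuffle y₁ y₂ g T)) (g n) (g (n+1)) = td) ∧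
        (n ∈ T → n ∉ S →
          blockProd gmap (zipWord (shuffle y₁ y₂ g S) (shuffle y₁ y₂ g T)) (g n) (g (n+1)) = tu) ∧
        (n ∈ S → n ∈ T →
          blockProd gmap (zipWord (shuffle y₁ y₂ g S) (shuffle y₁ y₂ g T)) (g n) (g (n+1)) = t) ∧
        (n ∉ S → n ∉ T →
          blockProd gmap (zipWord (shuffle y₁ y₂ g S) (shuffle y₁ y₂ g T)) (g n) (g (n+1)) = t)) ∧
      blockProd gmap (zipWord (shuffle y₁ y₂ g S) (shuffle y₁ y₂ g T)) 0 (g 0) =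
        blockProd gmap (zipWord y₂ y₂) 0 (g 0) := by
  intro S T
  constructor
  · intro n
    refine ⟨?_, ?_, ?_, ?_⟩ <;> intro hS hT
    · rw [blockProd_congr gmap _ (zipWord y₂ y₁) (g n) (g (n+1)) (fun i h1 h2 => by
        unfold zipWord
        rw [shuffle_eq y₁ y₂ g hg S h1 h2, shuffle_eq y₁ y₂ g hg T h1 h2,
          if_pos hS, if_neg hT])]
      exact h₂₁ n
    · rw [blockProd_congr gmap _ (zipWord y₁ y₂) (g n) (g (n+1)) (fun i h1 h2 => by
        unfold zipWord
        rw [shuffle_eq y₁ y₂ g hg S h1 h2, shuffle_eq y₁ y₂ g hg T h1 h2,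
          if_neg hT, if_pos hS])]
      exact h₁₂ n
    · rw [blockProd_congr gmap _ (zipWord y₂ y₂) (g n) (g (n+1)) (fun i h1 h2 => by
        unfold zipWord
        rw [shuffle_eq y₁ y₂ g hg S h1 h2, shuffle_eq y₁ y₂ g hg T h1 h2,
          if_pos hS, if_pos hT])]
      exact h₂₂ n
    · rw [blockProd_congr gmap _ (zipWord y₁ y₁) (g n) (g (n+1)) (fun i h1 h2 => by
        unfold zipWord
        rw [shuffle_eq y₁ y₂ g hg S h1 h2, shuffle_eq y₁ y₂ g hg T h1 h2,
          if_neg hS, if_neg hT])]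
      exact h₁₁ n
  · exact blockProd_congr gmap _ (zipWord y₂ y₂) 0 (g 0) (fun i _ h2 => by
      unfold zipWord
      rw [shuffle_lt y₁ y₂ g S h2, shuffle_lt y₁ y₂ g T h2])
end
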